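/- Let C ⊆ ℝ² be a nonempty closed convex set. Then C is approximately M-decomposable if and only if C is hyperbolic. -/

import Mathlib

open scoped InnerProductSpace Pointwise ENNReal
open Metric Filter

/-- The support function `σ_C(d) = sup_{x ∈ C} ⟪d, x⟫` of a set `C ⊆ ℝⁿ`,
with values in the extended reals. -/
noncomputable def suppFun {n : ℕ} (C : Set (EuclideanSpace ℝ (Fin n)))
    (d : EuclideanSpace ℝ (Fin n)) : EReal :=
  ⨆ x ∈ C, ((⟪d, x⟫_ℝ : ℝ) : EReal)

/-- The effective domain `dom σ_C = {d : σ_C(d) < +∞}` of the support function. -/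
def suppDom {n : ℕ} (C : Set (EuclideanSpace ℝ (Fin n))) :
    Set (EuclideanSpace ℝ (Fin n)) :=
  {d | suppFun C d < ⊤}

/-- The recession cone `rec C` of a set `C`. -/
def recCone {n : ℕ} (C : Set (EuclideanSpace ℝ (Fin n))) :
    Set (EuclideanSpace ℝ (Fin n)) :=
  {y | ∀ x ∈ C, ∀ t : ℝ, 0 ≤ t → x + t • y ∈ C}

/-- The truncation `C_r = (C ∩ rB) + rec C` of `C` of radius `r`. -/
def trunc {n : ℕ} (C : Set (EuclideanSpace ℝ (Fin n))) (r : ℝ) :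
    Set (EuclideanSpace ℝ (Fin n)) :=
  (C ∩ closedBall 0 r) + recCone C

/-- `C` is approximately M-decomposable: for every `ε > 0` there is `r > 0`
with `C ⊆ C_r + εB`. -/
def ApproxMDecomposable {n : ℕ} (C : Set (EuclideanSpace ℝ (Fin n))) : Prop :=
  ∀ ε > (0 : ℝ), ∃ r > (0 : ℝ), C ⊆ trunc C r + closedBall 0 ε

/-- `C` is M-decomposable: `C = M + rec C` for some compact convex `M`. -/
def MDecomposable {n : ℕ} (C : Set (EuclideanSpace ℝ (Fin n))) : Prop :=
  ∃ M : Set (EuclideanSpace ℝ (Fin n)), IsCompact M ∧ Convex ℝ M ∧ C = M + recCone C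

/-- `C` is hyperbolic: `C ⊆ M + rec C` for some compact convex `M`. -/
def Hyperbolic {n : ℕ} (C : Set (EuclideanSpace ℝ (Fin n))) : Prop :=
  ∃ M : Set (EuclideanSpace ℝ (Fin n)), IsCompact M ∧ Convex ℝ M ∧ C ⊆ M + recCone C

/-- The polar cone `K° = {d : ⟪d, x⟫ ≤ 0 for all x ∈ K}` of a cone `K`. -/
def polarCone {n : ℕ} (K : Set (EuclideanSpace ℝ (Fin n))) :
    Set (EuclideanSpace ℝ (Fin n)) :=
  {d | ∀ x ∈ K, ⟪d, x⟫_ℝ ≤ 0}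


section AuxiliaryLemmas

set_option maxHeartbeats 1000000

open scoped InnerProductSpace Pointwise
open Metric Filter

variable {n : ℕ}

private lemma recCone_zero (C : Set (EuclideanSpace ℝ (Fin n))) :
    (0 : EuclideanSpace ℝ (Fin n)) ∈ recCone C := by
  intro x hx t _; simpa using hx

private lemma recCone_smul {C : Set (EuclideanSpace ℝ (Fin n))} {k} (hk : k ∈ recCone C) {t : ℝ}
    (ht : 0 ≤ t) : t • k ∈ recCone C := by
  intro x hx s hs
  have := hk x hx (s * t) (mul_nonneg hs ht)
  simpa [smul_smul] using this

private lemma recCone_convex {C : Set (EuclideanSpace ℝ (Fin n))} (hconv : Convex ℝ C) :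
    Convex ℝ (recCone C) := by
  intro y₁ h₁ y₂ h₂ a b ha hb hab x hx t ht
  have e : x + t • (a • y₁ + b • y₂) = a • (x + t • y₁) + b • (x + t • y₂) := by
    have : x = a • x + b • x := by rw [← add_smul, hab, one_smul]
    rw [smul_add, smul_add, smul_add]
    rw [smul_comm t a y₁, smul_comm t b y₂]
    calc x + (a • (t • y₁) + b • (t • y₂))
        = a • x + b • x + (a • (t • y₁) + b • (t • y₂)) := by rw [← this]
    _ = a • x + a • (t • y₁) + (b • x + b • (t • y₂)) := by abel
  rw [e]
  exact hconv (h₁ x hx t ht) (h₂ x hx t ht) ha hb hab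

private lemma recCone_isClosed {C : Set (EuclideanSpace ℝ (Fin n))} (hcl : IsClosed C) :
    IsClosed (recCone C) := by
  have he : recCone C = ⋂ x ∈ C, ⋂ t ∈ Set.Ici (0:ℝ), (fun y => x + t • y) ⁻¹' C := by
    ext y; simp [recCone]
  rw [he]
  exact isClosed_biInter fun x hx => isClosed_biInter fun t ht =>
    hcl.preimage (continuous_const.add (continuous_const_smul t))

private lemma polarCone_zero (K : Set (EuclideanSpace ℝ (Fin n))) :
    (0 : EuclideanSpace ℝ (Fin n)) ∈ polarCone K := by
  intro x hx; simp

private lemma polarCone_smul {K : Set (EuclideanSpace ℝ (Fin n))} {d} (hd : d ∈ polarCone K)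
    {t : ℝ} (ht : 0 ≤ t) : t • d ∈ polarCone K := by
  intro x hx
  rw [real_inner_smul_left]
  exact mul_nonpos_of_nonneg_of_nonpos ht (hd x hx)

private lemma polarCone_convex (K : Set (EuclideanSpace ℝ (Fin n))) : Convex ℝ (polarCone K) := by
  intro d₁ h₁ d₂ h₂ a b ha hb _ x hx
  rw [inner_add_left, real_inner_smul_left, real_inner_smul_left]
  nlinarith [h₁ x hx, h₂ x hx]

private lemma polarCone_isClosed (K : Set (EuclideanSpace ℝ (Fin n))) :
    IsClosed (polarCone K) := by
  have he : polarCone K = ⋂ x ∈ K, {d : EuclideanSpace ℝ (Fin n) | ⟪d, x⟫_ℝ ≤ 0} := by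
    ext d; simp [polarCone]
  rw [he]
  exact isClosed_biInter fun x hx =>
    isClosed_le (continuous_id.inner continuous_const) continuous_const

/-- Expansion of a vector of the plane in an orthonormal pair. -/
private lemma expand_two {d w : EuclideanSpace ℝ (Fin 2)} (hd : ‖d‖ = 1) (hw : ‖w‖ = 1)
    (ho : ⟪d, w⟫_ℝ = 0) (x : EuclideanSpace ℝ (Fin 2)) :
    x = ⟪d, x⟫_ℝ • d + ⟪w, x⟫_ℝ • w := by
  have hdd : ⟪d, d⟫_ℝ = 1 := by
    rw [real_inner_self_eq_norm_mul_norm, hd]; ring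
  have hww : ⟪w, w⟫_ℝ = 1 := by
    rw [real_inner_self_eq_norm_mul_norm, hw]; ring
  have hwd : ⟪w, d⟫_ℝ = 0 := by rw [real_inner_comm]; exact ho
  have horth : Orthonormal ℝ ![d, w] := by
    rw [orthonormal_iff_ite]
    intro i j
    fin_cases i <;> fin_cases j <;>
      simp only [Matrix.cons_val_zero, Matrix.cons_val_one, Matrix.head_cons] <;>
      norm_num [hdd, hww, hwd, ho, hd, hw]
  have hcard : Fintype.card (Fin 2) = Module.finrank ℝ (EuclideanSpace ℝ (Fin 2)) := by
    simp
  let b := basisOfOrthonormalOfCardEqFinrank horth hcard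
  have hb : ⇑b = ![d, w] := coe_basisOfOrthonormalOfCardEqFinrank horth hcard
  have hrange : Set.range ![d, w] = {d, w} := by
    ext z
    simp only [Set.mem_range, Fin.exists_fin_two, Matrix.cons_val_zero, Matrix.cons_val_one,
      Matrix.head_cons, Set.mem_insert_iff, Set.mem_singleton_iff]
    tauto
  have hspan : Submodule.span ℝ ({d, w} : Set (EuclideanSpace ℝ (Fin 2))) = ⊤ := by
    have := b.span_eq
    rwa [hb, hrange] at this
  have hx : x ∈ Submodule.span ℝ ({d, w} : Set (EuclideanSpace ℝ (Fin 2))) := by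
    rw [hspan]; trivial
  obtain ⟨a, c, hac⟩ := Submodule.mem_span_pair.1 hx
  have ha : ⟪d, x⟫_ℝ = a := by
    rw [← hac, inner_add_right, real_inner_smul_right, real_inner_smul_right, hdd, ho]; ring
  have hc : ⟪w, x⟫_ℝ = c := by
    rw [← hac, inner_add_right, real_inner_smul_right, real_inner_smul_right, hww, hwd]; ring
  rw [ha, hc, hac]

/-- The two-dimensional cone lemma: near any point `d₀` of a closed convex cone `P ⊆ ℝ²`,
every point `d` of `P` dominates `β • d₀` in the order given by `P`. -/
private lemma cone_claim {P : Set (EuclideanSpace ℝ (Fin 2))} (hPc : IsClosed P)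
    (hPconv : Convex ℝ P)
    (hPsmul : ∀ p ∈ P, ∀ t : ℝ, 0 ≤ t → t • p ∈ P) (hP0 : (0 : EuclideanSpace ℝ (Fin 2)) ∈ P)
    {d₀ : EuclideanSpace ℝ (Fin 2)} (hd₀ : d₀ ∈ P) (hd₀n : ‖d₀‖ = 1) {β : ℝ}
    (hβ0 : 0 < β) (hβ1 : β < 1) :
    ∃ δ > 0, ∀ d ∈ P, ‖d - d₀‖ < δ → d - β • d₀ ∈ P := by
  by_contra hcon
  push_neg at hcon
  have hstep : ∀ m : ℕ, ∃ d ∈ P, ‖d - d₀‖ < 1 / (m + 1) ∧ d - β • d₀ ∉ P := by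
    intro m
    obtain ⟨d, hdP, hdn, hout⟩ := hcon (1 / (m + 1)) (by positivity)
    exact ⟨d, hdP, hdn, hout⟩
  choose dd hdP hdn hdout using hstep
  have sep : ∀ m : ℕ, ∃ v : EuclideanSpace ℝ (Fin 2), ‖v‖ = 1 ∧ (∀ p ∈ P, ⟪v, p⟫_ℝ ≤ 0) ∧
      0 < ⟪v, dd m - β • d₀⟫_ℝ := by
    intro m
    obtain ⟨f, u, hfS, hfx⟩ := geometric_hahn_banach_closed_point hPconv hPc (hdout m)
    set v₀ : EuclideanSpace ℝ (Fin 2) := (InnerProductSpace.toDual ℝ _).symm f with hv₀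
    have hv₀app : ∀ y, ⟪v₀, y⟫_ℝ = f y := fun y => InnerProductSpace.toDual_symm_apply
    have hu : 0 < u := by have := hfS 0 hP0; simpa using this
    · have hfle : ∀ p ∈ P, f p ≤ 0 := by
        intro p hp
        by_contra hc
        push_neg at hc
        have ht : (0:ℝ) ≤ max 0 ((u + 1) / f p) := le_max_left _ _
        have hmem := hfS _ (hPsmul p hp _ ht)
        rw [f.map_smul, smul_eq_mul] at hmem
        have h1 : (u + 1) / f p * f p ≤ max 0 ((u + 1) / f p) * f p :=
          mul_le_mul_of_nonneg_right (le_max_right _ _) hc.le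
        rw [div_mul_cancel₀ _ (ne_of_gt hc)] at h1
        linarith
      have hv₀ne : v₀ ≠ 0 := by
        intro h0
        have : f (dd m - β • d₀) = 0 := by rw [← hv₀app, h0]; simp
        linarith
      refine ⟨‖v₀‖⁻¹ • v₀, ?_, ?_, ?_⟩
      · rw [norm_smul, norm_inv, norm_norm, inv_mul_cancel₀ (norm_ne_zero_iff.2 hv₀ne)]
      · intro p hp
        rw [real_inner_smul_left]
        exact mul_nonpos_of_nonneg_of_nonpos (by positivity) (by rw [hv₀app]; exact hfle p hp)
      · rw [real_inner_smul_left, hv₀app]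
        have : 0 < f (dd m - β • d₀) := lt_trans hu hfx
        have hpos : 0 < ‖v₀‖⁻¹ := by
          rw [inv_pos, norm_pos_iff]; exact hv₀ne
        positivity
  choose vv hvn hvP hvpos using sep
  obtain ⟨w₀, hw₀s, φ, hφ, hφt⟩ :=
    (isCompact_sphere (0 : EuclideanSpace ℝ (Fin 2)) 1).tendsto_subseq
      (fun m => (mem_sphere_zero_iff_norm).2 (hvn m))
  have hw₀n : ‖w₀‖ = 1 := mem_sphere_zero_iff_norm.1 hw₀s
  have hddt : Filter.Tendsto dd atTop (nhds d₀) := by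
    rw [tendsto_iff_norm_sub_tendsto_zero]
    apply squeeze_zero (fun m => norm_nonneg _) (fun m => (hdn m).le)
    exact tendsto_one_div_add_atTop_nhds_zero_nat
  have hddφt : Filter.Tendsto (fun m => dd (φ m)) atTop (nhds d₀) :=
    hddt.comp hφ.tendsto_atTop
  have hw₀P : ∀ p ∈ P, ⟪w₀, p⟫_ℝ ≤ 0 := by
    intro p hp
    exact le_of_tendsto (hφt.inner tendsto_const_nhds)
      (Filter.Eventually.of_forall fun m => hvP (φ m) p hp)
  have hw₀d₀ : ⟪w₀, d₀⟫_ℝ = 0 := by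
    have h1 : Filter.Tendsto (fun m => ⟪vv (φ m), dd (φ m)⟫_ℝ) atTop (nhds ⟪w₀, d₀⟫_ℝ) :=
      hφt.inner hddφt
    have h2 : Filter.Tendsto (fun m => β * ⟪vv (φ m), d₀⟫_ℝ) atTop (nhds (β * ⟪w₀, d₀⟫_ℝ)) :=
      (hφt.inner tendsto_const_nhds).const_mul β
    have hineq : ∀ m, β * ⟪vv (φ m), d₀⟫_ℝ ≤ ⟪vv (φ m), dd (φ m)⟫_ℝ := by
      intro m
      have := hvpos (φ m)
      rw [inner_sub_right, real_inner_smul_right] at this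
      linarith
    have hge : β * ⟪w₀, d₀⟫_ℝ ≤ ⟪w₀, d₀⟫_ℝ :=
      le_of_tendsto_of_tendsto' h2 h1 hineq
    have hle : ⟪w₀, d₀⟫_ℝ ≤ 0 := hw₀P d₀ hd₀
    nlinarith
  have hq : Filter.Tendsto (fun m => ⟪d₀, dd (φ m)⟫_ℝ) atTop (nhds 1) := by
    have h : Filter.Tendsto (fun m => ⟪d₀, dd (φ m)⟫_ℝ) atTop (nhds ⟪d₀, d₀⟫_ℝ) :=
      Filter.Tendsto.inner tendsto_const_nhds hddφt
    have e : ⟪d₀, d₀⟫_ℝ = 1 := by rw [real_inner_self_eq_norm_mul_norm, hd₀n]; ring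
    rwa [e] at h
  have hcc : Filter.Tendsto (fun m => ⟪w₀, vv (φ m)⟫_ℝ) atTop (nhds 1) := by
    have h : Filter.Tendsto (fun m => ⟪w₀, vv (φ m)⟫_ℝ) atTop (nhds ⟪w₀, w₀⟫_ℝ) :=
      Filter.Tendsto.inner tendsto_const_nhds hφt
    have e : ⟪w₀, w₀⟫_ℝ = 1 := by rw [real_inner_self_eq_norm_mul_norm, hw₀n]; ring
    rwa [e] at h
  have hev : ∀ᶠ m in atTop, β < ⟪d₀, dd (φ m)⟫_ℝ ∧ 0 < ⟪w₀, vv (φ m)⟫_ℝ := by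
    filter_upwards [hq.eventually (eventually_gt_nhds hβ1),
      hcc.eventually (eventually_gt_nhds (by norm_num : (0:ℝ) < 1))] with m h1 h2
    exact ⟨h1, by linarith⟩
  obtain ⟨m, hmq, hmc⟩ := hev.exists
  set v := vv (φ m)
  set d := dd (φ m)
  have he : ⟪d₀, v⟫_ℝ ≤ 0 := by
    rw [real_inner_comm]; exact hvP (φ m) d₀ hd₀
  have hp : ⟪w₀, d⟫_ℝ ≤ 0 := hw₀P d (hdP (φ m))
  have hexp : v = ⟪d₀, v⟫_ℝ • d₀ + ⟪w₀, v⟫_ℝ • w₀ :=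
    expand_two hd₀n hw₀n (by rw [real_inner_comm]; exact hw₀d₀) v
  have hcontra := hvpos (φ m)
  rw [inner_sub_right, real_inner_smul_right] at hcontra
  have hvd : ⟪v, d⟫_ℝ = ⟪d₀, v⟫_ℝ * ⟪d₀, d⟫_ℝ + ⟪w₀, v⟫_ℝ * ⟪w₀, d⟫_ℝ := by
    conv_lhs => rw [hexp]
    rw [inner_add_left, real_inner_smul_left, real_inner_smul_left]
  have hvd₀ : ⟪v, d₀⟫_ℝ = ⟪d₀, v⟫_ℝ := real_inner_comm _ _
  rw [hvd, hvd₀] at hcontra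
  nlinarith [hmq, hmc, he, hp, hcontra]

private lemma truncBall_convex {C : Set (EuclideanSpace ℝ (Fin n))} (hconv : Convex ℝ C)
    (r ε : ℝ) : Convex ℝ (trunc C r + closedBall 0 ε) :=
  (((hconv.inter (convex_closedBall _ _)).add (recCone_convex hconv)).add (convex_closedBall _ _))

private lemma truncBall_isClosed {C : Set (EuclideanSpace ℝ (Fin n))} (hcl : IsClosed C)
    (r ε : ℝ) : IsClosed (trunc C r + closedBall 0 ε) := by
  have he : trunc C r + closedBall 0 ε
      = ((C ∩ closedBall 0 r) + closedBall 0 ε) + recCone C := by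
    rw [trunc, add_right_comm]
  rw [he]
  have hcomp : IsCompact ((C ∩ closedBall 0 r) + closedBall (0 : EuclideanSpace ℝ (Fin n)) ε) :=
    ((isCompact_closedBall _ _).inter_left hcl).add (isCompact_closedBall _ _)
  exact (recCone_isClosed hcl).add_left_of_isCompact hcomp

/-- Separation step: a point of `C` outside the fattened truncation gives a unit functional. -/
private lemma sep_step {C : Set (EuclideanSpace ℝ (Fin n))} (hcl : IsClosed C)
    (hconv : Convex ℝ C)
    {ε r : ℝ} (hε : 0 < ε) {x₀ : EuclideanSpace ℝ (Fin n)} (hx₀ : x₀ ∈ C) (hx₀r : ‖x₀‖ ≤ r)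
    {x : EuclideanSpace ℝ (Fin n)} (hx : x ∉ trunc C r + closedBall 0 ε) :
    ∃ d : EuclideanSpace ℝ (Fin n), ‖d‖ = 1 ∧ d ∈ polarCone (recCone C) ∧
      ∀ c ∈ C, ‖c‖ ≤ r → ⟪d, c⟫_ℝ + ε ≤ ⟪d, x⟫_ℝ := by
  obtain ⟨f, u, hfS, hfx⟩ :=
    geometric_hahn_banach_closed_point (truncBall_convex hconv r ε) (truncBall_isClosed hcl r ε) hx
  set w : EuclideanSpace ℝ (Fin n) := (InnerProductSpace.toDual ℝ _).symm f with hw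
  have hwapp : ∀ y, ⟪w, y⟫_ℝ = f y := fun y => InnerProductSpace.toDual_symm_apply
  have hmem : ∀ c ∈ C, ‖c‖ ≤ r → ∀ k ∈ recCone C, ∀ b : EuclideanSpace ℝ (Fin n), ‖b‖ ≤ ε →
      c + k + b ∈ trunc C r + closedBall 0 ε := by
    intro c hc hcr k hk b hb
    exact Set.add_mem_add (Set.add_mem_add ⟨hc, mem_closedBall_zero_iff.2 hcr⟩ hk)
      (mem_closedBall_zero_iff.2 hb)
  have hwpolar : ∀ k ∈ recCone C, ⟪w, k⟫_ℝ ≤ 0 := by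
    intro k hk
    by_contra hc
    push_neg at hc
    set t : ℝ := max 0 ((u - f x₀ + 1) / ⟪w, k⟫_ℝ) with htdef
    have ht : 0 ≤ t := le_max_left _ _
    have hmem' := hmem x₀ hx₀ hx₀r (t • k) (recCone_smul hk ht) 0 (by simpa using hε.le)
    rw [add_zero] at hmem'
    have hlt := hfS _ hmem'
    rw [← hwapp] at hlt
    rw [inner_add_right, real_inner_smul_right] at hlt
    have h1 : (u - f x₀ + 1) / ⟪w, k⟫_ℝ * ⟪w, k⟫_ℝ ≤ t * ⟪w, k⟫_ℝ :=
      mul_le_mul_of_nonneg_right (le_max_right _ _) hc.le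
    rw [div_mul_cancel₀ _ (ne_of_gt hc)] at h1
    rw [hwapp] at hlt
    linarith [hlt, h1]
  have hwne : w ≠ 0 := by
    intro h0
    have h1 : f x = 0 := by rw [← hwapp, h0]; simp
    have h2 := hfS _ (hmem x₀ hx₀ hx₀r 0 (recCone_zero C) 0 (by simpa using hε.le))
    rw [add_zero, add_zero] at h2
    have h3 : f x₀ = 0 := by rw [← hwapp, h0]; simp
    linarith
  have hwpos : 0 < ‖w‖ := norm_pos_iff.2 hwne
  refine ⟨‖w‖⁻¹ • w, ?_, ?_, ?_⟩
  · rw [norm_smul, norm_inv, norm_norm, inv_mul_cancel₀ (ne_of_gt hwpos)]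
  · intro k hk
    rw [real_inner_smul_left]
    exact mul_nonpos_of_nonneg_of_nonpos (by positivity) (hwpolar k hk)
  · intro c hc hcr
    have hbmem : ε • (‖w‖⁻¹ • w) ∈ closedBall (0 : EuclideanSpace ℝ (Fin n)) ε := by
      rw [mem_closedBall_zero_iff, norm_smul, norm_smul, norm_inv, norm_norm,
        inv_mul_cancel₀ (ne_of_gt hwpos)]
      simp [abs_of_pos hε]
    have hmem' := hmem c hc hcr 0 (recCone_zero C) _ (mem_closedBall_zero_iff.1 hbmem)
    rw [add_zero] at hmem'
    have hlt := lt_trans (hfS _ hmem') hfx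
    rw [← hwapp, ← hwapp, inner_add_right] at hlt
    have hself : ⟪w, ε • (‖w‖⁻¹ • w)⟫_ℝ = ε * ‖w‖ := by
      rw [real_inner_smul_right, real_inner_smul_right, real_inner_self_eq_norm_mul_norm]
      field_simp
    rw [hself] at hlt
    rw [real_inner_smul_left, real_inner_smul_left]
    have := mul_le_mul_of_nonneg_left hlt.le (inv_nonneg.2 hwpos.le)
    rw [mul_add] at this
    have he : ‖w‖⁻¹ * (ε * ‖w‖) = ε := by field_simp
    rw [he] at this
    linarith

/-- The basic support-function estimate for a hyperbolic set. -/
private lemma suppBound {C M : Set (EuclideanSpace ℝ (Fin n))} {R : ℝ}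
    (hCM : C ⊆ M + recCone C) (hMR : M ⊆ closedBall 0 R) :
    ∀ d ∈ polarCone (recCone C), ∀ x ∈ C, ⟪d, x⟫_ℝ ≤ R * ‖d‖ := by
  intro d hd x hx
  obtain ⟨m, hm, k, hk, hmk⟩ := hCM hx
  have h1 : ⟪d, m⟫_ℝ ≤ ‖d‖ * ‖m‖ := real_inner_le_norm d m
  have h2 : ⟪d, k⟫_ℝ ≤ 0 := hd k hk
  have hm' : ‖m‖ ≤ R := mem_closedBall_zero_iff.1 (hMR hm)
  have hcalc : ⟪d, x⟫_ℝ = ⟪d, m⟫_ℝ + ⟪d, k⟫_ℝ := by rw [← hmk, inner_add_right]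
  nlinarith [norm_nonneg d, norm_nonneg m]

/-- The hard direction: in the plane, hyperbolic implies approximately M-decomposable. -/
private theorem main_hard (C : Set (EuclideanSpace ℝ (Fin 2)))
    (hne : C.Nonempty) (hcl : IsClosed C) (hconv : Convex ℝ C) (hH : Hyperbolic C) :
    ApproxMDecomposable C := by
  obtain ⟨M, hMcomp, _hMconv, hCM⟩ := hH
  obtain ⟨R₀, hMR₀⟩ := hMcomp.isBounded.subset_closedBall 0
  set R : ℝ := max R₀ 0 with hRdef
  have hMR : M ⊆ closedBall 0 R := hMR₀.trans (closedBall_subset_closedBall (le_max_left _ _))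
  have hR : 0 ≤ R := le_max_right _ _
  obtain ⟨x₀, hx₀⟩ := hne
  by_contra happ
  rw [ApproxMDecomposable] at happ
  push_neg at happ
  obtain ⟨ε, hε, hbad⟩ := happ
  set r : ℕ → ℝ := fun m => ‖x₀‖ + m + 1 with hrdef
  have hrpos : ∀ m : ℕ, 0 < r m := by
    intro m
    have h1 : (0:ℝ) ≤ m := Nat.cast_nonneg m
    have h2 := norm_nonneg x₀
    simp only [hrdef]
    linarith
  have hx₀r : ∀ m : ℕ, ‖x₀‖ ≤ r m := by
    intro m
    have : (0:ℝ) ≤ m := Nat.cast_nonneg m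
    simp only [hrdef]; linarith
  have hrge : ∀ m : ℕ, (m : ℝ) ≤ r m := by
    intro m
    have := norm_nonneg x₀
    simp only [hrdef]; linarith
  choose xx hxC hxout using fun m : ℕ => Set.not_subset.1 (hbad (r m) (hrpos m))
  have hstep := fun m : ℕ => sep_step hcl hconv hε hx₀ (hx₀r m) (hxout m)
  choose dd hdn hdP hdineq using hstep
  obtain ⟨d₀, hd₀s, φ, hφ, hφt⟩ :=
    (isCompact_sphere (0 : EuclideanSpace ℝ (Fin 2)) 1).tendsto_subseq
      (fun m => (mem_sphere_zero_iff_norm).2 (hdn m))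
  have hd₀n : ‖d₀‖ = 1 := mem_sphere_zero_iff_norm.1 hd₀s
  have hd₀P : d₀ ∈ polarCone (recCone C) :=
    (polarCone_isClosed (recCone C)).mem_of_tendsto hφt
      (Filter.Eventually.of_forall fun m => hdP (φ m))
  set S : Set ℝ := (fun x => ⟪d₀, x⟫_ℝ) '' C with hSdef
  have hSne : S.Nonempty := ⟨_, x₀, hx₀, rfl⟩
  have hSbdd : BddAbove S := by
    refine ⟨R, ?_⟩
    rintro _ ⟨y, hy, rfl⟩
    have := suppBound hCM hMR d₀ hd₀P y hy
    rwa [hd₀n, mul_one] at this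
  set σ : ℝ := sSup S with hσdef
  have hσub : ∀ y ∈ C, ⟪d₀, y⟫_ℝ ≤ σ := fun y hy => le_csSup hSbdd ⟨y, hy, rfl⟩
  obtain ⟨y, hyS, hy⟩ := exists_lt_of_lt_csSup hSne (show σ - ε/4 < σ by linarith)
  obtain ⟨xs, hxsC, rfl⟩ := hyS
  set δ' : ℝ := min (1/2) (ε / (8 * (|σ| + R + 1))) with hδ'def
  have hδ'pos : 0 < δ' := by
    apply lt_min (by norm_num)
    have : 0 < |σ| + R + 1 := by positivity
    positivity
  have hδ'le : δ' ≤ ε / (8 * (|σ| + R + 1)) := min_le_right _ _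
  have hδ'half : δ' ≤ 1/2 := min_le_left _ _
  set β : ℝ := 1 - δ' with hβdef
  have hβ0 : 0 < β := by simp only [hβdef]; linarith
  have hβ1 : β < 1 := by simp only [hβdef]; linarith
  obtain ⟨δ, hδpos, hδprop⟩ := cone_claim (polarCone_isClosed (recCone C))
    (polarCone_convex (recCone C)) (fun p hp t ht => polarCone_smul hp ht)
    (polarCone_zero (recCone C)) hd₀P hd₀n hβ0 hβ1
  have hφtend : Filter.Tendsto (fun m => dd (φ m)) atTop (nhds d₀) := hφt
  set η : ℝ := min δ (min (ε / (8 * (R + 1))) (ε / (4 * (‖xs‖ + 1)))) with hηdef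
  have hηpos : 0 < η := by
    refine lt_min hδpos (lt_min (by positivity) (by positivity))
  have hev1 : ∀ᶠ m in atTop, ‖dd (φ m) - d₀‖ < η := by
    obtain ⟨N, hN⟩ := Metric.tendsto_atTop.1 hφtend η hηpos
    refine Filter.eventually_atTop.2 ⟨N, fun m hm => ?_⟩
    have := hN m hm
    rwa [dist_eq_norm] at this
  have hev2 : ∀ᶠ m in atTop, ‖xs‖ ≤ r (φ m) := by
    obtain ⟨N, hN⟩ := exists_nat_ge ‖xs‖
    refine Filter.eventually_atTop.2 ⟨N, fun m hm => ?_⟩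
    have h1 : (N : ℝ) ≤ (φ m : ℝ) := by
      exact_mod_cast le_trans hm hφ.le_apply
    calc ‖xs‖ ≤ (N : ℝ) := hN
    _ ≤ (φ m : ℝ) := h1
    _ ≤ r (φ m) := hrge (φ m)
  obtain ⟨m, hm1, hm2⟩ := (hev1.and hev2).exists
  set d := dd (φ m) with hddef
  set x := xx (φ m) with hxdef
  have hxC' : x ∈ C := hxC (φ m)
  have hkey1 : ⟪d, xs⟫_ℝ + ε ≤ ⟪d, x⟫_ℝ := hdineq (φ m) xs hxsC hm2
  have hdd₀ : ‖d - d₀‖ < δ := lt_of_lt_of_le hm1 (min_le_left _ _)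
  have hvP : d - β • d₀ ∈ polarCone (recCone C) := hδprop d (hdP (φ m)) hdd₀
  set v := d - β • d₀ with hvdef
  have hvn : ‖v‖ ≤ ‖d - d₀‖ + δ' := by
    have he : v = (d - d₀) + δ' • d₀ := by
      simp only [hvdef, hβdef]
      rw [sub_smul, one_smul]
      abel
    calc ‖v‖ = ‖(d - d₀) + δ' • d₀‖ := by rw [he]
    _ ≤ ‖d - d₀‖ + ‖δ' • d₀‖ := norm_add_le _ _
    _ = ‖d - d₀‖ + δ' := by rw [norm_smul, hd₀n, Real.norm_eq_abs, abs_of_pos hδ'pos, mul_one]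
  have hkey2 : ⟪v, x⟫_ℝ ≤ R * ‖v‖ := suppBound hCM hMR v hvP x hxC'
  have hkey3 : ⟪d, x⟫_ℝ = β * ⟪d₀, x⟫_ℝ + ⟪v, x⟫_ℝ := by
    simp only [hvdef]
    rw [inner_sub_left, real_inner_smul_left]
    ring
  have hkey4 : ⟪d₀, x⟫_ℝ ≤ σ := hσub x hxC'
  have hkey5 : |⟪d - d₀, xs⟫_ℝ| ≤ ε/4 := by
    have h1 := abs_real_inner_le_norm (d - d₀) xs
    have h2 : ‖d - d₀‖ ≤ ε / (4 * (‖xs‖ + 1)) :=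
      (le_of_lt hm1).trans ((min_le_right _ _).trans (min_le_right _ _))
    have h3 : ‖d - d₀‖ * ‖xs‖ ≤ ε / (4 * (‖xs‖ + 1)) * ‖xs‖ :=
      mul_le_mul_of_nonneg_right h2 (norm_nonneg _)
    have h4 : ε / (4 * (‖xs‖ + 1)) * ‖xs‖ ≤ ε/4 := by
      rw [div_mul_eq_mul_div, div_le_div_iff₀ (by positivity) (by norm_num)]
      nlinarith [norm_nonneg xs]
    linarith
  have hdxs : ⟪d, xs⟫_ℝ = ⟪d₀, xs⟫_ℝ + ⟪d - d₀, xs⟫_ℝ := by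
    rw [inner_sub_left]; ring
  have hβσ : β * ⟪d₀, x⟫_ℝ ≤ σ + δ' * |σ| := by
    have h1 : β * ⟪d₀, x⟫_ℝ ≤ β * σ := mul_le_mul_of_nonneg_left hkey4 hβ0.le
    have h2 : β * σ = σ - δ' * σ := by simp only [hβdef]; ring
    have h3 : -( δ' * σ) ≤ δ' * |σ| := by
      have := neg_abs_le σ
      nlinarith [hδ'pos.le]
    linarith
  have hRv : R * ‖v‖ ≤ ε/8 + R * δ' := by
    have h2 : ‖d - d₀‖ ≤ ε / (8 * (R + 1)) :=
      (le_of_lt hm1).trans ((min_le_right _ _).trans (min_le_left _ _))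
    have h3 : R * ‖d - d₀‖ ≤ R * (ε / (8 * (R + 1))) :=
      mul_le_mul_of_nonneg_left h2 hR
    have h4 : R * (ε / (8 * (R + 1))) ≤ ε/8 := by
      rw [mul_div_assoc']
      rw [div_le_div_iff₀ (by positivity) (by norm_num)]
      nlinarith
    have h5 : R * ‖v‖ ≤ R * (‖d - d₀‖ + δ') := mul_le_mul_of_nonneg_left hvn hR
    nlinarith
  have hδ'fin : δ' * (|σ| + R) ≤ ε/8 := by
    have h1 : δ' * (|σ| + R) ≤ (ε / (8 * (|σ| + R + 1))) * (|σ| + R) := by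
      apply mul_le_mul_of_nonneg_right hδ'le
      positivity
    have h2 : (ε / (8 * (|σ| + R + 1))) * (|σ| + R) ≤ ε/8 := by
      rw [div_mul_eq_mul_div, div_le_div_iff₀ (by positivity) (by norm_num)]
      nlinarith [abs_nonneg σ]
    linarith
  have habs : ⟪d - d₀, xs⟫_ℝ ≥ -(ε/4) := neg_le_of_abs_le hkey5
  linarith [hkey1, hkey2, hkey3, hβσ, hRv, hδ'fin, hy, hdxs, habs]

/-- The easy direction: approximately M-decomposable implies hyperbolic. -/
private theorem main_easy (C : Set (EuclideanSpace ℝ (Fin 2)))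
    (hA : ApproxMDecomposable C) : Hyperbolic C := by
  obtain ⟨r, hr, hsub⟩ := hA 1 (by norm_num)
  refine ⟨closedBall 0 (r + 1), isCompact_closedBall _ _, convex_closedBall _ _, ?_⟩
  intro x hx
  obtain ⟨y, hy, b, hb, hyb⟩ := hsub hx
  obtain ⟨c, hc, k, hk, hck⟩ := hy
  refine Set.mem_add.2 ⟨c + b, ?_, k, hk, ?_⟩
  · rw [mem_closedBall_zero_iff]
    have h1 : ‖c‖ ≤ r := mem_closedBall_zero_iff.1 hc.2
    have h2 : ‖b‖ ≤ 1 := mem_closedBall_zero_iff.1 hb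
    calc ‖c + b‖ ≤ ‖c‖ + ‖b‖ := norm_add_le _ _
    _ ≤ r + 1 := by linarith
  · rw [← hyb, ← hck]; show c + b + k = c + k + b; exact add_right_comm c b k

end AuxiliaryLemmas

/-- in the plane, `C` is approximately M-decomposable if and only
if it is hyperbolic. -/
theorem approxMDecomposable_iff_hyperbolic_dim_two
    (C : Set (EuclideanSpace ℝ (Fin 2)))
    (hne : C.Nonempty) (hcl : IsClosed C) (hconv : Convex ℝ C) :
    ApproxMDecomposable C ↔ Hyperbolic C := by
  exact ⟨fun hA => main_easy C hA, fun hH => main_hard C hne hcl hconv hH⟩
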